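/- Let F be a non-affine fractional linear map on ℝⁿ (i.e., with c ≠ 0), let x₀ be a point in the domain of F and set y₀ = F(x₀). Then there exist invertible linear maps B, C ∈ GL_n(ℝ) such that for every x ∈ ℝⁿ for which the expressions are defined (x₁ ≠ 1 and Cx + x₀ not on the defining hyperplane of F), one has B(F(Cx + x₀) − y₀) = F₀(x), where F₀(x) = x/(x₁ − 1) is the canonical fractional linear map. -/

import Mathlib

open Pointwise

/-- **Proposition (canonical form of a fractional linear map).**
Let `F(x) = (Mx + b)/(⟨x,c⟩ + d)` be a non-affine fractional linear map
(`c ≠ 0`, block matrix `[[M,b],[c,d]]` invertible, expressed as bijectivity of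
the corresponding linear map on `ℝⁿ × ℝ`), let `x₀` be in the domain of `F`
and `y₀ = F(x₀)`. Then there are invertible linear maps `B`, `C` such that
`B(F(Cx + x₀) - y₀) = F₀(x)` wherever both sides are defined, where
`F₀(x) = x/(x₁ - 1)` is the canonical fractional linear map. -/
theorem exists_canonical_form (n : ℕ) [NeZero n]
    (M : EuclideanSpace ℝ (Fin n) →ₗ[ℝ] EuclideanSpace ℝ (Fin n))
    (b c : EuclideanSpace ℝ (Fin n)) (d : ℝ) (hc : c ≠ 0)
    (hdet : Function.Bijective (fun p : EuclideanSpace ℝ (Fin n) × ℝ =>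
      (M p.1 + p.2 • b, (inner ℝ p.1 c : ℝ) + p.2 * d)))
    (x₀ : EuclideanSpace ℝ (Fin n)) (hx₀ : (inner ℝ x₀ c : ℝ) + d ≠ 0) :
    ∃ B C : EuclideanSpace ℝ (Fin n) ≃ₗ[ℝ] EuclideanSpace ℝ (Fin n),
      ∀ x : EuclideanSpace ℝ (Fin n), x 0 ≠ 1 →
        (inner ℝ (C x + x₀) c : ℝ) + d ≠ 0 →
        B (((inner ℝ (C x + x₀) c : ℝ) + d)⁻¹ • (M (C x + x₀) + b) -
            ((inner ℝ x₀ c : ℝ) + d)⁻¹ • (M x₀ + b)) = (x 0 - 1)⁻¹ • x := by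
  classical
  have hx₀' : (inner ℝ x₀ c : ℝ) + d ≠ 0 := hx₀
  set t₀ : ℝ := (inner ℝ x₀ c : ℝ) + d with ht₀def
  have hcn : ‖c‖ ≠ 0 := norm_ne_zero_iff.mpr hc
  -- the unit vector e₀
  set e₀ : EuclideanSpace ℝ (Fin n) := EuclideanSpace.single 0 (1 : ℝ) with he₀
  -- Submodule.reflection sending c to ‖c‖ • e₀
  set R := Submodule.reflection (ℝ ∙ (c - ‖c‖ • e₀))ᗮ with hR
  have hRc : R c = ‖c‖ • e₀ := by
    apply Submodule.reflection_sub
    rw [norm_smul, he₀]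
    simp [EuclideanSpace.norm_single]
  set k : ℝ := -t₀ / ‖c‖ with hk
  have hkne : k ≠ 0 := div_ne_zero (neg_ne_zero.mpr hx₀) hcn
  -- C
  set C : EuclideanSpace ℝ (Fin n) ≃ₗ[ℝ] EuclideanSpace ℝ (Fin n) :=
    R.toLinearEquiv.trans (LinearEquiv.smulOfNeZero ℝ _ k hkne) with hCdef
  have hCapp : ∀ x : EuclideanSpace ℝ (Fin n), C x = k • R x := fun x => rfl
  have hCinner : ∀ x : EuclideanSpace ℝ (Fin n), (inner ℝ (C x) c : ℝ) = -t₀ * x 0 := by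
    intro x
    rw [hCapp, real_inner_smul_left]
    have h1 : (inner ℝ (R x) c : ℝ) = inner ℝ x (R c) := by
      conv_lhs => rw [← Submodule.reflection_reflection (ℝ ∙ (c - ‖c‖ • e₀))ᗮ c]
      exact (Submodule.reflection (ℝ ∙ (c - ‖c‖ • e₀))ᗮ).inner_map_map x (R c)
    rw [h1, hRc, real_inner_smul_right]
    have h2 : (inner ℝ x e₀ : ℝ) = x 0 := by
      rw [he₀]; simp [EuclideanSpace.inner_single_right]
    rw [h2, hk]
    field_simp
  -- the linear map L
  set L : EuclideanSpace ℝ (Fin n) →ₗ[ℝ] EuclideanSpace ℝ (Fin n) :=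
    M - LinearMap.smulRight ((innerSL ℝ c).toLinearMap) (t₀⁻¹ • (M x₀ + b)) with hL
  have hLapp : ∀ v : EuclideanSpace ℝ (Fin n),
      L v = M v - (t₀⁻¹ * (inner ℝ v c : ℝ)) • (M x₀ + b) := by
    intro v
    simp only [hL, LinearMap.sub_apply, LinearMap.smulRight_apply,
      ContinuousLinearMap.coe_coe, innerSL_apply_apply, real_inner_comm c v]
    match_scalars <;> ring
  have hLinj : Function.Injective L := by
    rw [injective_iff_map_eq_zero]
    intro v hv
    set s : ℝ := t₀⁻¹ * (inner ℝ v c : ℝ) with hs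
    have h1 : M (v - s • x₀) + (-s) • b = L v := by
      rw [hLapp, ← hs]
      rw [map_sub, map_smul]
      match_scalars <;> ring
    have h2 : (inner ℝ (v - s • x₀) c : ℝ) + (-s) * d = 0 := by
      have h8 : t₀⁻¹ * t₀ = 1 := inv_mul_cancel₀ hx₀
      rw [inner_sub_left, real_inner_smul_left, hs]
      linear_combination (-(inner ℝ v c : ℝ)) * h8 + (t₀⁻¹ * (inner ℝ v c : ℝ)) * ht₀def
    have hz : ((v - s • x₀, -s) : EuclideanSpace ℝ (Fin n) × ℝ) = (0, 0) := by
      apply hdet.injective (a₂ := ((0 : EuclideanSpace ℝ (Fin n)), (0 : ℝ)))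
      simp only [Prod.mk.injEq]
      constructor
      · rw [h1, hv]; simp
      · rw [h2]; simp
    have hs0 : s = 0 := by
      have := congrArg Prod.snd hz
      simpa using this
    have hw := congrArg Prod.fst hz
    simp only [hs0, zero_smul, sub_zero] at hw
    exact hw
  have hLbij : Function.Bijective L :=
    ⟨hLinj, (LinearMap.injective_iff_surjective).mp hLinj⟩
  set Leq := LinearEquiv.ofBijective L hLbij with hLeq
  have ht₀ne : t₀ ≠ 0 := hx₀
  -- B
  set B := Leq.symm.trans (C.symm.trans
    (LinearEquiv.smulOfNeZero ℝ _ (-t₀) (neg_ne_zero.mpr ht₀ne))) with hB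
  refine ⟨B, C, fun x hx1 hden => ?_⟩
  have huc : (inner ℝ (C x) c : ℝ) = -t₀ * x 0 := hCinner x
  set t : ℝ := (inner ℝ (C x + x₀) c : ℝ) + d with ht
  have htval : t = t₀ * (1 - x 0) := by
    rw [ht, inner_add_left, huc, ht₀def]; ring
  have hx1' : (1 : ℝ) - x 0 ≠ 0 := by
    intro h; apply hx1; linarith
  have htne : t ≠ 0 := hden
  -- rewrite the argument as t⁻¹ • L (C x)
  have h5 : L (C x) = M (C x) + x 0 • (M x₀ + b) := by
    rw [hLapp, huc]
    have : t₀⁻¹ * (-t₀ * x 0) = -x 0 := by field_simp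
    rw [this, neg_smul, sub_neg_eq_add]
  have harg : t⁻¹ • (M (C x + x₀) + b) - t₀⁻¹ • (M x₀ + b) = t⁻¹ • L (C x) := by
    have h7 : t⁻¹ * (t₀ * (1 - x 0)) = 1 := by rw [← htval]; exact inv_mul_cancel₀ htne
    have h8 : t₀⁻¹ * t₀ = 1 := inv_mul_cancel₀ ht₀ne
    have h6 : t⁻¹ - t₀⁻¹ = t⁻¹ * x 0 := by
      linear_combination t₀⁻¹ * h7 - (t⁻¹ * (1 - x 0)) * h8
    rw [h5, show M (C x + x₀) + b = M (C x) + (M x₀ + b) by rw [map_add]; abel,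
      smul_add t⁻¹ (M (C x)) (M x₀ + b), smul_add t⁻¹ (M (C x)) (x 0 • (M x₀ + b)),
      smul_smul, ← h6, sub_smul]
    abel
  rw [harg, map_smul]
  have hBL : B (L (C x)) = (-t₀) • x := by
    rw [hB]
    simp only [LinearEquiv.trans_apply]
    rw [show L (C x) = Leq (C x) from rfl, LinearEquiv.symm_apply_apply,
      LinearEquiv.symm_apply_apply]
    rfl
  rw [hBL, smul_smul]
  congr 1
  have hx1'' : x 0 - 1 ≠ 0 := sub_ne_zero.mpr hx1
  have h7 : t⁻¹ * (t₀ * (1 - x 0)) = 1 := by rw [← htval]; exact inv_mul_cancel₀ htne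
  have h9 : (x 0 - 1)⁻¹ * (x 0 - 1) = 1 := inv_mul_cancel₀ hx1''
  linear_combination (x 0 - 1)⁻¹ * h7 + (t₀ * t⁻¹) * h9
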